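/- Let c ∈ (0,1), let x_j, y_j ∈ R satisfy x_j² + y_j² = (1−c)² for j = 1, 2, 3, and set X_j = (x_j, y_j) ∈ R². Let V_j be the 4×4 matrix with entries (V_j)_{12} = x_j, (V_j)_{13} = y_j, (V_j)_{24} = x_j, (V_j)_{34} = y_j, all other entries zero, and let A_j = cI + V_j. With a_{jk} = 1 if j = k and −1 otherwise, and p_V(z) = Σ_{j,k=1}^3 a_{jk} z_j z_k, the (1,4)-entry of the matrix p_V(A_1, A_2, A_3) equals Σ_{j,k=1}^3 a_{jk} ⟨X_j, X_k⟩, and consequently ‖p_V(A_1, A_2, A_3)‖ ≥ 3(1−c)² − 2(⟨X_1,X_2⟩ + ⟨X_2,X_3⟩ + ⟨X_3,X_1⟩). -/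

import Mathlib

/-- The Kaijser–Varopoulos nilpotent `4 × 4` matrix with parameters `x, y ∈ ℝ`. -/
noncomputable def KVmatrix (x y : ℝ) : Matrix (Fin 4) (Fin 4) ℂ :=
  !![0, (x : ℂ), (y : ℂ), 0;
     0, 0, 0, (x : ℂ);
     0, 0, 0, (y : ℂ);
     0, 0, 0, 0]

/-- The sign matrix `a_{jk}` (`1` on the diagonal, `−1` off it). -/
def KVsign (j k : Fin 3) : ℝ := if j = k then 1 else -1

open Matrix in
lemma KV_entry_le_norm (M : Matrix (Fin 4) (Fin 4) ℂ) (i j : Fin 4) :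
    ‖M i j‖ ≤ ‖Matrix.toEuclideanCLM (𝕜 := ℂ) M‖ := by
  have hentry : (Matrix.toEuclideanCLM (𝕜 := ℂ) M (EuclideanSpace.single j 1)) i = M i j := by
    have h := congrFun (Matrix.ofLp_toEuclideanCLM (𝕜 := ℂ) M
      (EuclideanSpace.single j 1)) i
    have h1 : WithLp.ofLp
        ((toEuclideanCLM (𝕜 := ℂ) M) (EuclideanSpace.single j 1)) i
        = (toEuclideanCLM (𝕜 := ℂ) M) (EuclideanSpace.single j 1) i := rfl
    rw [h1] at h
    rw [h]
    have h2 : WithLp.ofLp (EuclideanSpace.single j (1 : ℂ)) = Pi.single j 1 := rfl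
    rw [h2, Matrix.mulVec_single]
    simp
  have h := (Matrix.toEuclideanCLM (𝕜 := ℂ) M).le_opNorm (EuclideanSpace.single j 1)
  rw [EuclideanSpace.norm_single, norm_one, mul_one] at h
  refine le_trans ?_ h
  calc ‖M i j‖ = ‖(Matrix.toEuclideanCLM (𝕜 := ℂ) M (EuclideanSpace.single j 1)) i‖ := by
        rw [hentry]
    _ ≤ _ := by
        have := norm_inner_le_norm (𝕜 := ℂ) (EuclideanSpace.single i (1 : ℂ))
          (Matrix.toEuclideanCLM (𝕜 := ℂ) M (EuclideanSpace.single j 1))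
        simpa [EuclideanSpace.inner_single_left] using this

/-- Let `c ∈ (0,1)`, `x_j² + y_j² = (1−c)²`, `X_j = (x_j, y_j) ∈ ℝ²`,
`V_j` the Kaijser–Varopoulos matrices, `A_j = cI + V_j`. With
`p_V(z) = Σ_{j,k} a_{jk} z_j z_k`, the `(1,4)` entry of `p_V(A₁,A₂,A₃) = Σ_{j,k} a_{jk} A_j A_k`
equals `Σ_{j,k} a_{jk} ⟨X_j, X_k⟩`, and consequently
`‖p_V(A₁,A₂,A₃)‖ ≥ 3(1−c)² − 2(⟨X₁,X₂⟩ + ⟨X₂,X₃⟩ + ⟨X₃,X₁⟩)`. -/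
theorem KV_entry_and_norm_bound (c : ℝ) (hc : 0 < c) (hc1 : c < 1)
    (x y : Fin 3 → ℝ) (hxy : ∀ j, x j ^ 2 + y j ^ 2 = (1 - c) ^ 2)
    (A : Fin 3 → Matrix (Fin 4) (Fin 4) ℂ)
    (hA : ∀ j, A j = (c : ℂ) • (1 : Matrix (Fin 4) (Fin 4) ℂ) + KVmatrix (x j) (y j)) :
    (∑ j : Fin 3, ∑ k : Fin 3, (KVsign j k : ℂ) • (A j * A k)) 0 3 =
        ((∑ j : Fin 3, ∑ k : Fin 3, KVsign j k * (x j * x k + y j * y k) : ℝ) : ℂ) ∧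
    ‖Matrix.toEuclideanCLM (𝕜 := ℂ)
        (∑ j : Fin 3, ∑ k : Fin 3, (KVsign j k : ℂ) • (A j * A k))‖ ≥
      3 * (1 - c) ^ 2 -
        2 * ((x 0 * x 1 + y 0 * y 1) + (x 1 * x 2 + y 1 * y 2) + (x 2 * x 0 + y 2 * y 0)) := by
  have key : ∀ j k : Fin 3, (A j * A k) 0 3 = ((x j * x k + y j * y k : ℝ) : ℂ) := by
    intro j k
    rw [hA j, hA k]
    simp [KVmatrix, Matrix.mul_apply, Fin.sum_univ_four, Matrix.one_apply]
  have h1 : (∑ j : Fin 3, ∑ k : Fin 3, (KVsign j k : ℂ) • (A j * A k)) 0 3 =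
      ((∑ j : Fin 3, ∑ k : Fin 3, KVsign j k * (x j * x k + y j * y k) : ℝ) : ℂ) := by
    simp only [Matrix.sum_apply, Matrix.smul_apply, key, smul_eq_mul]
    push_cast
    ring
  refine ⟨h1, ?_⟩
  set S : ℝ := ∑ j : Fin 3, ∑ k : Fin 3, KVsign j k * (x j * x k + y j * y k) with hS
  have hSval : S = 3 * (1 - c) ^ 2 -
      2 * ((x 0 * x 1 + y 0 * y 1) + (x 1 * x 2 + y 1 * y 2) + (x 2 * x 0 + y 2 * y 0)) := by
    rw [hS]
    simp only [Fin.sum_univ_three, KVsign]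
    norm_num [Fin.ext_iff]
    have h0 := hxy 0; have h1 := hxy 1; have h2 := hxy 2
    nlinarith [h0, h1, h2]
  have hle := KV_entry_le_norm (∑ j : Fin 3, ∑ k : Fin 3, (KVsign j k : ℂ) • (A j * A k)) 0 3
  rw [h1] at hle
  have : ‖((S : ℝ) : ℂ)‖ = |S| := by simp [Complex.norm_real]
  rw [this] at hle
  calc 3 * (1 - c) ^ 2 -
        2 * ((x 0 * x 1 + y 0 * y 1) + (x 1 * x 2 + y 1 * y 2) + (x 2 * x 0 + y 2 * y 0))
      = S := hSval.symm
    _ ≤ |S| := le_abs_self S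
    _ ≤ _ := hle
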